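/- For every integer k ≥ 3 and every integer n ≥ k³, the family of all k-element subsets of [n] cannot be written as the union of n − 2k + 2 intersecting families of k-element subsets of [n], each of which is non-trivial (covering number at least 2). -/

import Mathlib

open Finset

/-- Counting supersets: members of a `k`-uniform family containing a fixed `s`-set. -/
private lemma count_supersets {n k s : ℕ} (F : Finset (Finset (Fin n)))
    (hF : ∀ B ∈ F, B.card = k) (T : Finset (Fin n)) (hT : T.card = s) :
    (F.filter (fun B => T ⊆ B)).card ≤ Nat.choose (n - s) (k - s) := by
  classical
  have h1 : (F.filter (fun B => T ⊆ B)).card ≤ (Finset.powersetCard (k - s) Tᶜ).card := by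
    apply Finset.card_le_card_of_injOn (fun B => B \ T)
    · intro B hB
      simp only [Finset.mem_coe, Finset.mem_filter] at hB ⊢
      rw [Finset.mem_powersetCard]
      refine ⟨fun x hx => ?_, ?_⟩
      · rw [Finset.mem_sdiff] at hx
        simpa [Finset.mem_compl] using hx.2
      · rw [Finset.card_sdiff_of_subset hB.2, hF B hB.1, hT]
    · intro B1 h1 B2 h2 h
      simp only [Finset.coe_filter, Set.mem_setOf_eq] at h1 h2
      have h' := congrArg (· ∪ T) h
      simpa [Finset.sdiff_union_of_subset h1.2, Finset.sdiff_union_of_subset h2.2] using h'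
  rwa [Finset.card_powersetCard, Finset.card_compl, Fintype.card_fin, hT] at h1

/-- If every member of a `k`-uniform family contains some `s`-set from `S`, then
`|F| ≤ |S| * C(n-s, k-s)`. -/
private lemma key {n k s : ℕ} (F S : Finset (Finset (Fin n)))
    (hF : ∀ B ∈ F, B.card = k) (hS : ∀ T ∈ S, T.card = s)
    (hcov : ∀ B ∈ F, ∃ T ∈ S, T ⊆ B) :
    F.card ≤ S.card * Nat.choose (n - s) (k - s) := by
  classical
  have hsub : F ⊆ S.biUnion (fun T => F.filter (fun B => T ⊆ B)) := by
    intro B hB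
    obtain ⟨T, hT, hTB⟩ := hcov B hB
    exact Finset.mem_biUnion.2 ⟨T, hT, Finset.mem_filter.2 ⟨hB, hTB⟩⟩
  calc F.card ≤ (S.biUnion (fun T => F.filter (fun B => T ⊆ B))).card :=
        Finset.card_le_card hsub
    _ ≤ ∑ T ∈ S, (F.filter (fun B => T ⊆ B)).card := Finset.card_biUnion_le
    _ ≤ ∑ _T ∈ S, Nat.choose (n - s) (k - s) :=
        Finset.sum_le_sum (fun T hT => count_supersets F hF T (hS T hT))
    _ = S.card * Nat.choose (n - s) (k - s) := by
        rw [Finset.sum_const, smul_eq_mul]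

/-- arithmetic: `k² C(n-3,k-3) ≤ C(n-2,k-2)` for `n ≥ k³`. -/
private lemma arith1 (k n : ℕ) (hk : 3 ≤ k) (hn : k ^ 3 ≤ n) :
    k ^ 2 * Nat.choose (n - 3) (k - 3) ≤ Nat.choose (n - 2) (k - 2) := by
  obtain ⟨l, rfl⟩ : ∃ l, k = l + 3 := ⟨k - 3, by omega⟩
  have h27 : 27 ≤ n := le_trans (by calc (27:ℕ) = 3 ^ 3 := rfl
    _ ≤ (l + 3) ^ 3 := Nat.pow_le_pow_left (by omega) 3) hn
  obtain ⟨m, rfl⟩ : ∃ m, n = m + 3 := ⟨n - 3, by omega⟩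
  have hid : (m + 1) * Nat.choose m l = Nat.choose (m + 1) (l + 1) * (l + 1) :=
    Nat.add_one_mul_choose_eq m l
  have hml : (l + 3) ^ 2 * (l + 1) ≤ m + 1 := by
    have hcube : (l + 3) ^ 2 * (l + 1) + 2 ≤ (l + 3) ^ 3 := by nlinarith [sq_nonneg (l + 3)]
    have := hn
    omega
  have hstep : (l + 3) ^ 2 * Nat.choose m l * (m + 1)
      ≤ Nat.choose (m + 1) (l + 1) * (m + 1) := by
    calc (l + 3) ^ 2 * Nat.choose m l * (m + 1)
        = (l + 3) ^ 2 * ((m + 1) * Nat.choose m l) := by ring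
      _ = (l + 3) ^ 2 * (Nat.choose (m + 1) (l + 1) * (l + 1)) := by rw [hid]
      _ = Nat.choose (m + 1) (l + 1) * ((l + 3) ^ 2 * (l + 1)) := by ring
      _ ≤ Nat.choose (m + 1) (l + 1) * (m + 1) := Nat.mul_le_mul_left _ hml
  have := Nat.le_of_mul_le_mul_right hstep (by omega)
  simpa using this

/-- arithmetic: `k³ C(n-3,k-3) ≤ (k+1) C(n-2,k-2)` for `n ≥ k³`. -/
private lemma arith2 (k n : ℕ) (hk : 3 ≤ k) (hn : k ^ 3 ≤ n) :
    k ^ 3 * Nat.choose (n - 3) (k - 3) ≤ (k + 1) * Nat.choose (n - 2) (k - 2) := by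
  obtain ⟨l, rfl⟩ : ∃ l, k = l + 3 := ⟨k - 3, by omega⟩
  have h27 : 27 ≤ n := le_trans (by calc (27:ℕ) = 3 ^ 3 := rfl
    _ ≤ (l + 3) ^ 3 := Nat.pow_le_pow_left (by omega) 3) hn
  obtain ⟨m, rfl⟩ : ∃ m, n = m + 3 := ⟨n - 3, by omega⟩
  have hid : (m + 1) * Nat.choose m l = Nat.choose (m + 1) (l + 1) * (l + 1) :=
    Nat.add_one_mul_choose_eq m l
  have hml : (l + 3) ^ 3 * (l + 1) ≤ (l + 4) * (m + 1) := by
    have h3 : l + 3 ≤ (l + 3) ^ 3 := Nat.le_self_pow (by norm_num) _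
    have hstep2 : (l + 3) ^ 3 * (l + 1) + 2 * (l + 4)
        ≤ (l + 4) * (m + 1) + 2 * (l + 4) := by
      calc (l + 3) ^ 3 * (l + 1) + 2 * (l + 4)
          ≤ (l + 3) ^ 3 * (l + 1) + 3 * ((l + 3) ^ 3) := by linarith
        _ = (l + 4) * ((l + 3) ^ 3) := by ring
        _ ≤ (l + 4) * (m + 3) := Nat.mul_le_mul_left _ hn
        _ = (l + 4) * (m + 1) + 2 * (l + 4) := by ring
    exact Nat.le_of_add_le_add_right hstep2
  have hstep : (l + 3) ^ 3 * Nat.choose m l * (m + 1)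
      ≤ (l + 4) * Nat.choose (m + 1) (l + 1) * (m + 1) := by
    calc (l + 3) ^ 3 * Nat.choose m l * (m + 1)
        = (l + 3) ^ 3 * ((m + 1) * Nat.choose m l) := by ring
      _ = (l + 3) ^ 3 * (Nat.choose (m + 1) (l + 1) * (l + 1)) := by rw [hid]
      _ = Nat.choose (m + 1) (l + 1) * ((l + 3) ^ 3 * (l + 1)) := by ring
      _ ≤ Nat.choose (m + 1) (l + 1) * ((l + 4) * (m + 1)) :=
          Nat.mul_le_mul_left _ hml
      _ = (l + 4) * Nat.choose (m + 1) (l + 1) * (m + 1) := by ring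
  have := Nat.le_of_mul_le_mul_right hstep (by omega)
  simpa using this

/-- Bound on the members containing a fixed element `c`, given a member avoiding `c`. -/
private lemma filter_mem_bound {n k : ℕ} (F : Finset (Finset (Fin n)))
    (hF : ∀ B ∈ F, B.card = k)
    (hint : ∀ A ∈ F, ∀ B ∈ F, (A ∩ B).Nonempty)
    (c : Fin n) (Wc : Finset (Fin n)) (hWcF : Wc ∈ F) (hWc : c ∉ Wc) :
    (F.filter (fun B => c ∈ B)).card ≤ k * Nat.choose (n - 2) (k - 2) := by
  classical
  have hb := key (F.filter (fun B => c ∈ B)) (Wc.image (fun w => ({c, w} : Finset (Fin n))))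
    (fun B hB => hF B (Finset.mem_of_mem_filter B hB))
    (by
      intro T hT
      obtain ⟨w, hw, rfl⟩ := Finset.mem_image.1 hT
      exact Finset.card_eq_two.2 ⟨c, w, fun h => hWc (h ▸ hw), rfl⟩)
    (by
      intro B hB
      rw [Finset.mem_filter] at hB
      obtain ⟨w, hw⟩ := hint B hB.1 Wc hWcF
      rw [Finset.mem_inter] at hw
      refine ⟨{c, w}, Finset.mem_image.2 ⟨w, hw.2, rfl⟩, ?_⟩
      rw [Finset.insert_subset_iff, Finset.singleton_subset_iff]
      exact ⟨hB.2, hw.1⟩)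
  calc (F.filter (fun B => c ∈ B)).card
      ≤ (Wc.image (fun w => ({c, w} : Finset (Fin n)))).card * Nat.choose (n - 2) (k - 2) := hb
    _ ≤ k * Nat.choose (n - 2) (k - 2) := by
        apply Nat.mul_le_mul_right
        calc (Wc.image (fun w => ({c, w} : Finset (Fin n)))).card ≤ Wc.card :=
              Finset.card_image_le
          _ = k := hF Wc hWcF

/-- Main per-family bound: a nontrivial intersecting `k`-uniform family on `Fin n`
with `n ≥ k³` has at most `(k+1) * C(n-2, k-2)` members. -/
private lemma family_bound {n k : ℕ} (hk : 3 ≤ k) (hn : k ^ 3 ≤ n)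
    (F : Finset (Finset (Fin n)))
    (hF : ∀ B ∈ F, B.card = k)
    (hint : ∀ A ∈ F, ∀ B ∈ F, (A ∩ B).Nonempty)
    (htau : ∀ C : Finset (Fin n), (∀ A ∈ F, (C ∩ A).Nonempty) → 2 ≤ C.card) :
    F.card ≤ (k + 1) * Nat.choose (n - 2) (k - 2) := by
  classical
  -- F is nonempty
  have hne : F.Nonempty := by
    rw [Finset.nonempty_iff_ne_empty]
    intro h
    subst h
    have h2 := htau ∅ (by intro A hA; simp at hA)
    simp at h2
  obtain ⟨A₀, hA₀⟩ := hne
  -- for every x there is a member avoiding x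
  have hWex : ∀ x : Fin n, ∃ B ∈ F, x ∉ B := by
    intro x
    by_contra h
    push_neg at h
    have h2 := htau {x} (by
      intro A hA
      exact ⟨x, Finset.mem_inter.2 ⟨Finset.mem_singleton_self x, h A hA⟩⟩)
    simp at h2
  choose W hWF hWx using hWex
  by_cases hc : ∃ x y : Fin n, x ≠ y ∧ ∀ B ∈ F, x ∈ B ∨ y ∈ B
  · obtain ⟨x, y, hxy, hcxy⟩ := hc
    by_cases hc2 : ∃ u v : Fin n, u ≠ v ∧ (∀ B ∈ F, u ∈ B ∨ v ∈ B) ∧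
        ({u, v} : Finset (Fin n)) ≠ {x, y}
    · obtain ⟨u, v, huv, hcuv, hne2⟩ := hc2
      by_cases hdisj : (({x, y} : Finset (Fin n)) ∩ {u, v}) = ∅
      · -- two disjoint 2-covers: every member contains one of ≤ 4 cross pairs
        have hb := key F (({x, y} : Finset (Fin n)).biUnion
            (fun a => ({u, v} : Finset (Fin n)).image (fun b => ({a, b} : Finset (Fin n)))))
          hF
          (by
            intro T hT
            rw [Finset.mem_biUnion] at hT
            obtain ⟨a, ha, hT⟩ := hT
            obtain ⟨b, hb, rfl⟩ := Finset.mem_image.1 hT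
            refine Finset.card_eq_two.2 ⟨a, b, ?_, rfl⟩
            intro h
            subst h
            have : a ∈ (({x, y} : Finset (Fin n)) ∩ {u, v}) := Finset.mem_inter.2 ⟨ha, hb⟩
            rw [hdisj] at this
            simp at this)
          (by
            intro B hB
            have h1 : x ∈ B ∨ y ∈ B := hcxy B hB
            have h2 : u ∈ B ∨ v ∈ B := hcuv B hB
            have h1' : ∃ a ∈ ({x, y} : Finset (Fin n)), a ∈ B := by
              rcases h1 with h | h
              · exact ⟨x, by simp, h⟩
              · exact ⟨y, by simp, h⟩
            have h2' : ∃ b ∈ ({u, v} : Finset (Fin n)), b ∈ B := by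
              rcases h2 with h | h
              · exact ⟨u, by simp, h⟩
              · exact ⟨v, by simp, h⟩
            obtain ⟨a, ha, haB⟩ := h1'
            obtain ⟨b, hbm, hbB⟩ := h2'
            refine ⟨{a, b}, ?_, ?_⟩
            · exact Finset.mem_biUnion.2 ⟨a, ha, Finset.mem_image.2 ⟨b, hbm, rfl⟩⟩
            · rw [Finset.insert_subset_iff, Finset.singleton_subset_iff]
              exact ⟨haB, hbB⟩)
        have hcard4 : (({x, y} : Finset (Fin n)).biUnion
            (fun a => ({u, v} : Finset (Fin n)).image (fun b => ({a, b} : Finset (Fin n))))).card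
            ≤ 4 := by
          calc _ ≤ ∑ a ∈ ({x, y} : Finset (Fin n)),
                (({u, v} : Finset (Fin n)).image (fun b => ({a, b} : Finset (Fin n)))).card :=
              Finset.card_biUnion_le
            _ ≤ ∑ _a ∈ ({x, y} : Finset (Fin n)), 2 := by
                apply Finset.sum_le_sum
                intro a _
                calc _ ≤ ({u, v} : Finset (Fin n)).card := Finset.card_image_le
                  _ ≤ 2 := Finset.card_insert_le _ _ |>.trans (by simp)
            _ ≤ 4 := by
                rw [Finset.sum_const, smul_eq_mul]
                have : ({x, y} : Finset (Fin n)).card ≤ 2 :=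
                  Finset.card_insert_le _ _ |>.trans (by simp)
                omega
        calc F.card ≤ _ := hb
          _ ≤ 4 * Nat.choose (n - 2) (k - 2) :=
              Nat.mul_le_mul_right _ hcard4
          _ ≤ (k + 1) * Nat.choose (n - 2) (k - 2) :=
              Nat.mul_le_mul_right _ (by omega)
      · -- the two distinct 2-covers share an element c
        obtain ⟨cc, hcc⟩ := Finset.nonempty_iff_ne_empty.2 hdisj
        rw [Finset.mem_inter] at hcc
        obtain ⟨hc1, hc2'⟩ := hcc
        -- extract partners p, q with Cov cc p, Cov cc q, p ≠ q, p ≠ cc, q ≠ cc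
        have hmain : ∃ p q : Fin n, p ≠ q ∧
            (∀ B ∈ F, cc ∈ B ∨ p ∈ B) ∧ (∀ B ∈ F, cc ∈ B ∨ q ∈ B) := by
          simp only [Finset.mem_insert, Finset.mem_singleton] at hc1 hc2'
          have hsymm : ∀ a b : Fin n, (∀ B ∈ F, a ∈ B ∨ b ∈ B) →
              (∀ B ∈ F, b ∈ B ∨ a ∈ B) := by
            intro a b h B hB
            exact (h B hB).symm
          rcases hc1 with rfl | rfl
          · rcases hc2' with rfl | rfl
            · -- cc = x = u ; partners y, v
              refine ⟨y, v, ?_, hcxy, hcuv⟩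
              intro h; subst h; exact hne2 rfl
            · -- cc = x = v ; partners y, u
              refine ⟨y, u, ?_, hcxy, hsymm u cc hcuv⟩
              intro h; subst h
              exact hne2 (by rw [Finset.pair_comm])
          · rcases hc2' with rfl | rfl
            · -- cc = y = u ; partners x, v
              refine ⟨x, v, ?_, hsymm x cc hcxy, hcuv⟩
              intro h; subst h
              exact hne2 (by rw [Finset.pair_comm cc x])
            · -- cc = y = v ; partners x, u
              refine ⟨x, u, ?_, hsymm x cc hcxy, hsymm u cc hcuv⟩
              intro h; subst h
              exact hne2 (by rw [Finset.pair_comm x cc, Finset.pair_comm cc x])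
        obtain ⟨p, q, hpq, hcp, hcq⟩ := hmain
        -- split by whether cc ∈ B
        have hsplit := Finset.card_filter_add_card_filter_not
          (s := F) (fun B => cc ∈ B)
        have h1 : (F.filter (fun B => cc ∈ B)).card ≤ k * Nat.choose (n - 2) (k - 2) :=
          filter_mem_bound F hF hint cc (W cc) (hWF cc) (hWx cc)
        have h2 : (F.filter (fun B => ¬ cc ∈ B)).card ≤ 1 * Nat.choose (n - 2) (k - 2) := by
          apply key (F.filter (fun B => ¬ cc ∈ B)) {({p, q} : Finset (Fin n))}
            (fun B hB => hF B (Finset.mem_of_mem_filter B hB))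
          · intro T hT
            rw [Finset.mem_singleton] at hT
            subst hT
            exact Finset.card_eq_two.2 ⟨p, q, hpq, rfl⟩
          · intro B hB
            rw [Finset.mem_filter] at hB
            have hp : p ∈ B := (hcp B hB.1).resolve_left hB.2
            have hq : q ∈ B := (hcq B hB.1).resolve_left hB.2
            refine ⟨{p, q}, Finset.mem_singleton_self _, ?_⟩
            rw [Finset.insert_subset_iff, Finset.singleton_subset_iff]
            exact ⟨hp, hq⟩
        calc F.card = (F.filter (fun B => cc ∈ B)).card
              + (F.filter (fun B => ¬ cc ∈ B)).card := hsplit.symm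
          _ ≤ k * Nat.choose (n - 2) (k - 2) + 1 * Nat.choose (n - 2) (k - 2) :=
              Nat.add_le_add h1 h2
          _ = (k + 1) * Nat.choose (n - 2) (k - 2) := by ring
    · -- unique 2-cover {x, y}
      push_neg at hc2
      have huniq : ∀ u v : Fin n, u ≠ v → (∀ B ∈ F, u ∈ B ∨ v ∈ B) →
          ({u, v} : Finset (Fin n)) = {x, y} := by
        intro u v h1 h2
        by_contra h3
        exact h3 (hc2 u v h1 h2)
      -- members containing x
      have h1 : (F.filter (fun B => x ∈ B)).card ≤ k * Nat.choose (n - 2) (k - 2) :=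
        filter_mem_bound F hF hint x (W x) (hWF x) (hWx x)
      -- members avoiding x: contain y, then a triple
      have hVex : ∀ z : Fin n, ∃ B ∈ F, (z ≠ x → (y ∉ B ∧ z ∉ B)) := by
        intro z
        by_cases hzx : z = x
        · exact ⟨A₀, hA₀, fun h => absurd hzx h⟩
        · by_cases hzy : z = y
          · subst hzy
            exact ⟨W z, hWF z, fun _ => ⟨hWx z, hWx z⟩⟩
          · have hnc : ¬ ∀ B ∈ F, y ∈ B ∨ z ∈ B := by
              intro hcyz
              have hyz : y ≠ z := fun h => hzy h.symm
              have := huniq y z hyz hcyz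
              have hz : z ∈ ({x, y} : Finset (Fin n)) := by
                rw [← this]; simp
              simp only [Finset.mem_insert, Finset.mem_singleton] at hz
              rcases hz with h | h
              · exact hzx h
              · exact hzy h
            push_neg at hnc
            obtain ⟨B, hBF, hBy, hBz⟩ := hnc
            exact ⟨B, hBF, fun _ => ⟨hBy, hBz⟩⟩
      choose V hVF hVp using hVex
      have h2 : (F.filter (fun B => ¬ x ∈ B)).card
          ≤ (k * k) * Nat.choose (n - 3) (k - 3) := by
        have hb := key (F.filter (fun B => ¬ x ∈ B))
          (((W y).erase x).biUnion
            (fun z => (V z).image (fun w => ({y, z, w} : Finset (Fin n)))))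
          (fun B hB => hF B (Finset.mem_of_mem_filter B hB))
          (by
            intro T hT
            rw [Finset.mem_biUnion] at hT
            obtain ⟨z, hz, hT⟩ := hT
            obtain ⟨w, hw, rfl⟩ := Finset.mem_image.1 hT
            have hzx : z ≠ x := Finset.ne_of_mem_erase hz
            have hzWy : z ∈ W y := Finset.mem_of_mem_erase hz
            have hzy : z ≠ y := fun h => hWx y (h ▸ hzWy)
            obtain ⟨hVy, hVz⟩ := hVp z hzx
            refine Finset.card_eq_three.2 ⟨y, z, w, fun h => hzy h.symm, ?_, ?_, rfl⟩
            · intro h; exact hVy (h ▸ hw)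
            · intro h; exact hVz (h ▸ hw)
            )
          (by
            intro B hB
            rw [Finset.mem_filter] at hB
            have hyB : y ∈ B := (hcxy B hB.1).resolve_left hB.2
            obtain ⟨z, hz⟩ := hint B hB.1 (W y) (hWF y)
            rw [Finset.mem_inter] at hz
            have hzx : z ≠ x := fun h => hB.2 (h ▸ hz.1)
            obtain ⟨w, hw⟩ := hint B hB.1 (V z) (hVF z)
            rw [Finset.mem_inter] at hw
            refine ⟨{y, z, w}, ?_, ?_⟩
            · refine Finset.mem_biUnion.2 ⟨z, Finset.mem_erase.2 ⟨hzx, hz.2⟩, ?_⟩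
              exact Finset.mem_image.2 ⟨w, hw.2, rfl⟩
            · rw [Finset.insert_subset_iff, Finset.insert_subset_iff,
                Finset.singleton_subset_iff]
              exact ⟨hyB, hz.1, hw.1⟩)
        have hcard : (((W y).erase x).biUnion
            (fun z => (V z).image (fun w => ({y, z, w} : Finset (Fin n))))).card ≤ k * k := by
          calc _ ≤ ∑ z ∈ (W y).erase x,
                ((V z).image (fun w => ({y, z, w} : Finset (Fin n)))).card :=
              Finset.card_biUnion_le
            _ ≤ ∑ _z ∈ (W y).erase x, k := by
                apply Finset.sum_le_sum
                intro z _
                calc _ ≤ (V z).card := Finset.card_image_le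
                  _ = k := hF (V z) (hVF z)
            _ = ((W y).erase x).card * k := by rw [Finset.sum_const, smul_eq_mul]
            _ ≤ k * k := by
                apply Nat.mul_le_mul_right
                calc ((W y).erase x).card ≤ (W y).card := Finset.card_erase_le
                  _ = k := hF (W y) (hWF y)
        calc (F.filter (fun B => ¬ x ∈ B)).card ≤ _ := hb
          _ ≤ (k * k) * Nat.choose (n - 3) (k - 3) := Nat.mul_le_mul_right _ hcard
      have h2' : (F.filter (fun B => ¬ x ∈ B)).card ≤ Nat.choose (n - 2) (k - 2) := by
        calc (F.filter (fun B => ¬ x ∈ B)).card ≤ (k * k) * Nat.choose (n - 3) (k - 3) := h2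
          _ = k ^ 2 * Nat.choose (n - 3) (k - 3) := by ring_nf
          _ ≤ Nat.choose (n - 2) (k - 2) := arith1 k n hk hn
      have hsplit := Finset.card_filter_add_card_filter_not
        (s := F) (fun B => x ∈ B)
      calc F.card = (F.filter (fun B => x ∈ B)).card
            + (F.filter (fun B => ¬ x ∈ B)).card := hsplit.symm
        _ ≤ k * Nat.choose (n - 2) (k - 2) + Nat.choose (n - 2) (k - 2) :=
            Nat.add_le_add h1 h2'
        _ = (k + 1) * Nat.choose (n - 2) (k - 2) := by ring
  · -- no 2-cover at all: every member contains a triple from a set of ≤ k³ triples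
    push_neg at hc
    have hW2ex : ∀ a b : Fin n, ∃ B ∈ F, a ∉ B ∧ b ∉ B := by
      intro a b
      by_cases hab : a = b
      · subst hab
        exact ⟨W a, hWF a, hWx a, hWx a⟩
      · obtain ⟨B, hBF, hBa, hBb⟩ := hc a b hab
        exact ⟨B, hBF, hBa, hBb⟩
    choose W2 hW2F hW2a hW2b using hW2ex
    have hb := key F
      (A₀.biUnion (fun a => (W a).biUnion
        (fun b => (W2 a b).image (fun c => ({a, b, c} : Finset (Fin n))))))
      hF
      (by
        intro T hT
        rw [Finset.mem_biUnion] at hT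
        obtain ⟨a, _, hT⟩ := hT
        rw [Finset.mem_biUnion] at hT
        obtain ⟨b, hbWa, hT⟩ := hT
        obtain ⟨c, hcW, rfl⟩ := Finset.mem_image.1 hT
        have hab : a ≠ b := fun h => hWx a (h ▸ hbWa)
        refine Finset.card_eq_three.2 ⟨a, b, c, hab, ?_, ?_, rfl⟩
        · intro h; exact hW2a a b (h ▸ hcW)
        · intro h; exact hW2b a b (h ▸ hcW))
      (by
        intro B hB
        obtain ⟨a, ha⟩ := hint B hB A₀ hA₀
        rw [Finset.mem_inter] at ha
        obtain ⟨b, hbm⟩ := hint B hB (W a) (hWF a)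
        rw [Finset.mem_inter] at hbm
        obtain ⟨c, hcm⟩ := hint B hB (W2 a b) (hW2F a b)
        rw [Finset.mem_inter] at hcm
        refine ⟨{a, b, c}, ?_, ?_⟩
        · refine Finset.mem_biUnion.2 ⟨a, ha.2, ?_⟩
          refine Finset.mem_biUnion.2 ⟨b, hbm.2, ?_⟩
          exact Finset.mem_image.2 ⟨c, hcm.2, rfl⟩
        · rw [Finset.insert_subset_iff, Finset.insert_subset_iff,
            Finset.singleton_subset_iff]
          exact ⟨ha.1, hbm.1, hcm.1⟩)
    have hcard : (A₀.biUnion (fun a => (W a).biUnion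
        (fun b => (W2 a b).image (fun c => ({a, b, c} : Finset (Fin n)))))).card
        ≤ k * (k * k) := by
      calc _ ≤ ∑ a ∈ A₀, ((W a).biUnion
            (fun b => (W2 a b).image (fun c => ({a, b, c} : Finset (Fin n))))).card :=
          Finset.card_biUnion_le
        _ ≤ ∑ _a ∈ A₀, k * k := by
            apply Finset.sum_le_sum
            intro a _
            calc _ ≤ ∑ b ∈ W a, ((W2 a b).image
                  (fun c => ({a, b, c} : Finset (Fin n)))).card := Finset.card_biUnion_le
              _ ≤ ∑ _b ∈ W a, k := by
                  apply Finset.sum_le_sum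
                  intro b _
                  calc _ ≤ (W2 a b).card := Finset.card_image_le
                    _ = k := hF _ (hW2F a b)
              _ = (W a).card * k := by rw [Finset.sum_const, smul_eq_mul]
              _ = k * k := by rw [hF _ (hWF a)]
        _ = A₀.card * (k * k) := by rw [Finset.sum_const, smul_eq_mul]
        _ = k * (k * k) := by rw [hF _ hA₀]
    calc F.card ≤ _ := hb
      _ ≤ (k * (k * k)) * Nat.choose (n - 3) (k - 3) := Nat.mul_le_mul_right _ hcard
      _ = k ^ 3 * Nat.choose (n - 3) (k - 3) := by ring_nf
      _ ≤ (k + 1) * Nat.choose (n - 2) (k - 2) := arith2 k n hk hn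

/-- final arithmetic: `(n-2k+2)(k+1)C(n-2,k-2) < C(n,k)` for `k ≥ 3`, `n ≥ k³`. -/
private lemma final_lt (k n : ℕ) (hk : 3 ≤ k) (hn : k ^ 3 ≤ n) :
    (n - 2 * k + 2) * ((k + 1) * Nat.choose (n - 2) (k - 2)) < Nat.choose n k := by
  obtain ⟨l, rfl⟩ : ∃ l, k = l + 3 := ⟨k - 3, by omega⟩
  have h27 : 27 ≤ n := le_trans (by calc (27:ℕ) = 3 ^ 3 := rfl
    _ ≤ (l + 3) ^ 3 := Nat.pow_le_pow_left (by omega) 3) hn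
  obtain ⟨m, rfl⟩ : ∃ m, n = m + 3 := ⟨n - 3, by omega⟩
  have hm : (l + 3) ^ 3 ≤ m + 3 := hn
  have e1 : Nat.choose (m + 3) (l + 3) * ((l + 3) * (l + 2))
      = (m + 3) * (m + 2) * Nat.choose (m + 1) (l + 1) := by
    have a1 : (m + 3) * Nat.choose (m + 2) (l + 2)
        = Nat.choose (m + 3) (l + 3) * (l + 3) := Nat.add_one_mul_choose_eq (m + 2) (l + 2)
    have a2 : (m + 2) * Nat.choose (m + 1) (l + 1)
        = Nat.choose (m + 2) (l + 2) * (l + 2) := Nat.add_one_mul_choose_eq (m + 1) (l + 1)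
    calc Nat.choose (m + 3) (l + 3) * ((l + 3) * (l + 2))
        = (Nat.choose (m + 3) (l + 3) * (l + 3)) * (l + 2) := by ring
      _ = ((m + 3) * Nat.choose (m + 2) (l + 2)) * (l + 2) := by rw [← a1]
      _ = (m + 3) * (Nat.choose (m + 2) (l + 2) * (l + 2)) := by ring
      _ = (m + 3) * ((m + 2) * Nat.choose (m + 1) (l + 1)) := by rw [← a2]
      _ = (m + 3) * (m + 2) * Nat.choose (m + 1) (l + 1) := by ring
  have hC2pos : 0 < Nat.choose (m + 1) (l + 1) := by
    apply Nat.choose_pos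
    have h3 : l + 3 ≤ (l + 3) ^ 3 := Nat.le_self_pow (by norm_num) _
    linarith [hm]
  have hB : (l + 4) * ((l + 3) * (l + 2)) ≤ m + 2 := by
    have hcube : (l + 4) * ((l + 3) * (l + 2)) + (l + 3) = (l + 3) ^ 3 := by ring
    omega
  have hA : (m + 3) - 2 * (l + 3) + 2 < m + 3 := by omega
  have e2 : ((m + 3) - 2 * (l + 3) + 2) * ((l + 4) * ((l + 3) * (l + 2)))
      < (m + 3) * (m + 2) := by
    calc ((m + 3) - 2 * (l + 3) + 2) * ((l + 4) * ((l + 3) * (l + 2)))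
        ≤ ((m + 3) - 2 * (l + 3) + 2) * (m + 2) := Nat.mul_le_mul_left _ hB
      _ < (m + 3) * (m + 2) := by
          apply Nat.mul_lt_mul_of_lt_of_le hA (le_refl _)
          omega
  have goal' : ((m + 3) - 2 * (l + 3) + 2) * ((l + 3 + 1) * Nat.choose (m + 1) (l + 1))
      * ((l + 3) * (l + 2))
      < Nat.choose (m + 3) (l + 3) * ((l + 3) * (l + 2)) := by
    rw [e1]
    calc ((m + 3) - 2 * (l + 3) + 2) * ((l + 3 + 1) * Nat.choose (m + 1) (l + 1))
        * ((l + 3) * (l + 2))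
        = (((m + 3) - 2 * (l + 3) + 2) * ((l + 4) * ((l + 3) * (l + 2))))
          * Nat.choose (m + 1) (l + 1) := by ring
      _ < ((m + 3) * (m + 2)) * Nat.choose (m + 1) (l + 1) := by
          exact Nat.mul_lt_mul_of_lt_of_le e2 (le_refl _) hC2pos
  have hfin := Nat.lt_of_mul_lt_mul_right goal'
  have hsub2 : (m + 3) - 2 = m + 1 := by omega
  have hsub2' : (l + 3) - 2 = l + 1 := by omega
  rw [hsub2, hsub2']
  exact hfin

/-- For `k ≥ 3` and `n ≥ k³`, the family of all `k`-element subsets of `[n]` cannot be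
written as the union of `n - 2k + 2` intersecting families, each with covering
number at least `2` (non-trivial). -/
theorem no_cover_by_nontrivial_intersecting_families_of_cube_le
    (k n : ℕ) (hk : 3 ≤ k) (hn : k ^ 3 ≤ n) :
    ¬ ∃ F : Fin (n - 2 * k + 2) → Finset (Finset (Fin n)),
      (∀ i, ∀ A ∈ F i, ∀ B ∈ F i, (A ∩ B).Nonempty) ∧
      (∀ i, ∀ C : Finset (Fin n), (∀ A ∈ F i, (C ∩ A).Nonempty) → 2 ≤ C.card) ∧
      Finset.univ.biUnion F = Finset.powersetCard k Finset.univ := by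
  rintro ⟨F, hint, htau, hcov⟩
  have hF : ∀ i, ∀ B ∈ F i, B.card = k := by
    intro i B hB
    have hmem : B ∈ Finset.univ.biUnion F :=
      Finset.mem_biUnion.2 ⟨i, Finset.mem_univ i, hB⟩
    rw [hcov] at hmem
    exact (Finset.mem_powersetCard.1 hmem).2
  have hbound : ∀ i, (F i).card ≤ (k + 1) * Nat.choose (n - 2) (k - 2) :=
    fun i => family_bound hk hn (F i) (hF i) (hint i) (htau i)
  have h1 : Nat.choose n k ≤ (n - 2 * k + 2) * ((k + 1) * Nat.choose (n - 2) (k - 2)) := by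
    have hcard : (Finset.powersetCard k (Finset.univ : Finset (Fin n))).card
        = Nat.choose n k := by
      rw [Finset.card_powersetCard, Finset.card_univ, Fintype.card_fin]
    calc Nat.choose n k = (Finset.univ.biUnion F).card := by rw [hcov, hcard]
      _ ≤ ∑ i, (F i).card := Finset.card_biUnion_le
      _ ≤ ∑ _i : Fin (n - 2 * k + 2), ((k + 1) * Nat.choose (n - 2) (k - 2)) :=
          Finset.sum_le_sum (fun i _ => hbound i)
      _ = (n - 2 * k + 2) * ((k + 1) * Nat.choose (n - 2) (k - 2)) := by
          rw [Finset.sum_const, Finset.card_univ, Fintype.card_fin, smul_eq_mul]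
  exact absurd h1 (Nat.not_le.2 (final_lt k n hk hn))
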